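/- Conjugacy breaks under restriction: there exist K ≥ 2, N ≥ 1, a binary matrix Z ∈ {0,1}^{N×K} with every row sum equal to 1, and α > 0, such that the restricted posterior density ν(π|Z) ∝ ∏_k π_k^{m_k + α/K - 1}(1-π_k)^{N-m_k} / ∏_n PoiBin(1|π) is not proportional to any product of independent Beta densities ∏_k π_k^{a_k-1}(1-π_k)^{b_k-1}. -/

import Mathlib

open Finset

/-- PoiBin(1|π) = Σ_k π_k ∏_{j≠k} (1 - π_j). -/
def poiBinOne {K : ℕ} (π : Fin K → ℝ) : ℝ :=
  ∑ k, π k * ∏ j ∈ Finset.univ.erase k, (1 - π j)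

lemma poiBinOne_two (π : Fin 2 → ℝ) :
    poiBinOne π = π 0 * (1 - π 1) + π 1 * (1 - π 0) := by
  rw [poiBinOne, Fin.sum_univ_two,
    show (Finset.univ.erase (0:Fin 2)) = {1} by decide,
    show (Finset.univ.erase (1:Fin 2)) = {0} by decide]
  simp

theorem restricted_posterior_not_beta_product :
    ∃ (K N : ℕ) (_ : 2 ≤ K) (_ : 1 ≤ N) (Z : Fin N → Fin K → Bool) (α : ℝ), 0 < α ∧
      (∀ n, (Finset.univ.filter (fun k => Z n k)).card = 1) ∧
      ¬ ∃ (c : ℝ) (a b : Fin K → ℝ),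
          ∀ π : Fin K → ℝ, (∀ k, π k ∈ Set.Ioo (0 : ℝ) 1) →
            (∏ k, (π k) ^ (((Finset.univ.filter (fun n => Z n k)).card : ℝ) + α / K - 1) *
                (1 - π k) ^ ((N : ℝ) - (Finset.univ.filter (fun n => Z n k)).card)) /
              (poiBinOne π) ^ N =
            c * ∏ k, (π k) ^ (a k - 1) * (1 - π k) ^ (b k - 1) := by
  refine ⟨2, 1, le_refl 2, le_refl 1, ![![true, false]], 1, one_pos, ?_, ?_⟩
  · intro n; fin_cases n; decide
  rintro ⟨c, a, b, h⟩
  have h1 := h ![1/2, 1/2] (by intro k; fin_cases k <;> constructor <;> norm_num)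
  have h2 := h ![1/4, 1/4] (by intro k; fin_cases k <;> constructor <;> norm_num)
  have h3 := h ![1/2, 1/4] (by intro k; fin_cases k <;> constructor <;> norm_num)
  have h4 := h ![1/4, 1/2] (by intro k; fin_cases k <;> constructor <;> norm_num)
  simp [Fin.prod_univ_two, poiBinOne_two] at h1 h2 h3 h4
  norm_num at h1 h2 h3 h4
  have ht : ((1:ℝ)/2) ^ ((1:ℝ)/2) * ((1:ℝ)/2) ^ (-((1:ℝ)/2)) = 1 := by
    rw [← Real.rpow_add (by norm_num)]; norm_num
  have hs : ((1:ℝ)/4) ^ ((1:ℝ)/2) * ((1:ℝ)/4) ^ (-((1:ℝ)/2)) = 1 := by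
    rw [← Real.rpow_add (by norm_num)]; norm_num
  have hts : (((1:ℝ)/2) ^ ((1:ℝ)/2) * ((1:ℝ)/2) ^ (-((1:ℝ)/2))) *
      (((1:ℝ)/4) ^ ((1:ℝ)/2) * ((1:ℝ)/4) ^ (-((1:ℝ)/2))) = 1 := by
    rw [ht, hs]; norm_num
  have e : ((1:ℝ) / 2) ^ ((1:ℝ) / 2) * ((1 / 2) ^ (-((1:ℝ) / 2)) * (1 / 2)) / (1 / 2) * 2 =
      (1 / 2) ^ ((1:ℝ) / 2) * (3 / 2) / (1 / 2) *
      ((1 / 2) ^ (-((1:ℝ) / 2)) * (1 / 2)) := by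
    rw [h1, h3, h4]
    linear_combination (c * (((1:ℝ) / 2) ^ (a 0 - 1) * (1 / 2) ^ (b 0 - 1) *
      ((1 / 2) ^ (a 1 - 1) * (1 / 2) ^ (b 1 - 1)))) * h2
  nlinarith [e, ht]
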